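/- arXiv:2602.14728 — 3 statements merged into one kernel-verified Lean document; each statement's English description precedes it below -/
import Mathlib

section
/- Let X, Y ∈ ℝ^{m × n} be real matrices and let τ ∈ ℝ with τ ≠ 0. If the column spaces intersect trivially, range(X) ∩ range(Y) = {0}, and the row spaces intersect trivially, range(Xᵀ) ∩ range(Yᵀ) = {0}, then rank(X − τY) = rank(X) + rank(Y). -/
open Matrix LinearMap

variable {m n : ℕ}

-- kernel of Euclidean lin = orthogonal of range of transpose
lemma ker_toEuclideanLin_eq (A : Matrix (Fin m) (Fin n) ℝ) :
    LinearMap.ker (Matrix.toEuclideanLin A) =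
      (LinearMap.range (Matrix.toEuclideanLin Aᵀ))ᗮ := by
  have h : Matrix.toEuclideanLin Aᵀ = LinearMap.adjoint (Matrix.toEuclideanLin A) := by
    simpa using Matrix.toEuclideanLin_conjTranspose_eq_adjoint A
  rw [h]
  ext v
  simp only [LinearMap.mem_ker, Submodule.mem_orthogonal]
  constructor
  · rintro hv x ⟨u, rfl⟩
    rw [LinearMap.adjoint_inner_left]
    simp [hv]
  · intro hv
    have := hv (LinearMap.adjoint (Matrix.toEuclideanLin A) (Matrix.toEuclideanLin A v))
      ⟨_, rfl⟩
    rw [LinearMap.adjoint_inner_left] at this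
    exact inner_self_eq_zero.mp this

lemma toEuclideanLin_eq_comp (A : Matrix (Fin m) (Fin n) ℝ) :
    Matrix.toEuclideanLin A =
      ((WithLp.linearEquiv 2 ℝ (Fin m → ℝ)).symm.toLinearMap.comp
        (A.mulVecLin.comp (WithLp.linearEquiv 2 ℝ (Fin n → ℝ)).toLinearMap)) := rfl

lemma range_toEuclideanLin (A : Matrix (Fin m) (Fin n) ℝ) :
    LinearMap.range (Matrix.toEuclideanLin A) =
      (LinearMap.range A.mulVecLin).map (show (Fin m → ℝ) →ₗ[ℝ] EuclideanSpace ℝ (Fin m) from (WithLp.linearEquiv 2 ℝ (Fin m → ℝ)).symm.toLinearMap) := by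
  rw [toEuclideanLin_eq_comp, LinearMap.range_comp, LinearMap.range_comp,
    LinearEquiv.range, Submodule.map_top]

lemma ker_toEuclideanLin (A : Matrix (Fin m) (Fin n) ℝ) :
    LinearMap.ker (Matrix.toEuclideanLin A) =
      (LinearMap.ker A.mulVecLin).map (show (Fin n → ℝ) →ₗ[ℝ] EuclideanSpace ℝ (Fin n) from (WithLp.linearEquiv 2 ℝ (Fin n → ℝ)).symm.toLinearMap) := by
  rw [toEuclideanLin_eq_comp, LinearMap.ker_comp, LinearEquiv.ker, Submodule.comap_bot,
    LinearMap.ker_comp, Submodule.comap_equiv_eq_map_symm]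

lemma ker_sup_eq_top (X Y : Matrix (Fin m) (Fin n) ℝ)
    (hrow : LinearMap.range X.transpose.mulVecLin ⊓ LinearMap.range Y.transpose.mulVecLin = ⊥) :
    LinearMap.ker X.mulVecLin ⊔ LinearMap.ker Y.mulVecLin = ⊤ := by
  set e := WithLp.linearEquiv 2 ℝ (Fin n → ℝ)
  set K := LinearMap.range (Matrix.toEuclideanLin Xᵀ)
  set L := LinearMap.range (Matrix.toEuclideanLin Yᵀ)
  have hKL : K ⊓ L = ⊥ := by
    have hinj : Function.Injective (WithLp.linearEquiv 2 ℝ (Fin n → ℝ)).symm :=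
      (WithLp.linearEquiv 2 ℝ (Fin n → ℝ)).symm.injective
    rw [show K = _ from range_toEuclideanLin Xᵀ, show L = _ from range_toEuclideanLin Yᵀ,
      ← Submodule.map_inf _ hinj, hrow, Submodule.map_bot]
  have horth : Kᗮ ⊔ Lᗮ = ⊤ := by
    have h1 : (Kᗮ ⊔ Lᗮ)ᗮ = ⊥ := by
      rw [← Submodule.inf_orthogonal, Submodule.orthogonal_orthogonal,
        Submodule.orthogonal_orthogonal, hKL]
    have := congrArg Submodule.orthogonal h1
    rwa [Submodule.orthogonal_orthogonal, Submodule.bot_orthogonal_eq_top] at this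
  have hE : LinearMap.ker (Matrix.toEuclideanLin X) ⊔ LinearMap.ker (Matrix.toEuclideanLin Y) = ⊤ := by
    rw [ker_toEuclideanLin_eq, ker_toEuclideanLin_eq]
    exact horth
  rw [ker_toEuclideanLin, ker_toEuclideanLin, ← Submodule.map_sup] at hE
  have htop : Submodule.map e.symm.toLinearMap (⊤ : Submodule ℝ (Fin n → ℝ)) = ⊤ := by
    rw [Submodule.map_top]
    exact LinearMap.range_eq_top.mpr e.symm.surjective
  exact Submodule.map_injective_of_injective e.symm.injective (hE.trans htop.symm)

/-- If the column spaces and the row spaces of `X` and `Y` both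
intersect trivially and `τ ≠ 0`, then `rank (X − τY) = rank X + rank Y`. -/
theorem rank_sub_smul_eq_add (m n : ℕ) (X Y : Matrix (Fin m) (Fin n) ℝ)
    (τ : ℝ) (hτ : τ ≠ 0)
    (hcol : LinearMap.range X.mulVecLin ⊓ LinearMap.range Y.mulVecLin = ⊥)
    (hrow : LinearMap.range X.transpose.mulVecLin ⊓ LinearMap.range Y.transpose.mulVecLin = ⊥) :
    (X - τ • Y).rank = X.rank + Y.rank := by
  classical
  -- Step A : kernel of the difference
  have hker : LinearMap.ker (X - τ • Y).mulVecLin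
      = LinearMap.ker X.mulVecLin ⊓ LinearMap.ker Y.mulVecLin := by
    ext v
    simp only [LinearMap.mem_ker, Submodule.mem_inf, Matrix.mulVecLin_apply,
      Matrix.sub_mulVec, Matrix.smul_mulVec, sub_eq_zero]
    constructor
    · intro h
      have hx : X *ᵥ v ∈ LinearMap.range X.mulVecLin ⊓ LinearMap.range Y.mulVecLin := by
        refine ⟨⟨v, rfl⟩, ⟨τ • v, ?_⟩⟩
        simp [Matrix.mulVec_smul, ← h]
      rw [hcol] at hx
      have hx0 : X *ᵥ v = 0 := hx
      have hy0 : Y *ᵥ v = 0 := by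
        have h2 : τ • (Y *ᵥ v) = 0 := by rw [← h, hx0]
        exact (smul_eq_zero.mp h2).resolve_left hτ
      exact ⟨hx0, hy0⟩
    · rintro ⟨hx0, h⟩
      rw [hx0, h, smul_zero]
  have hsup := ker_sup_eq_top X Y hrow
  -- rank-nullity facts
  have hX := LinearMap.finrank_range_add_finrank_ker X.mulVecLin
  have hY := LinearMap.finrank_range_add_finrank_ker Y.mulVecLin
  have hZ := LinearMap.finrank_range_add_finrank_ker (X - τ • Y).mulVecLin
  have hdim : Module.finrank ℝ (Fin n → ℝ) = n := by simp
  rw [hdim] at hX hY hZ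
  rw [hker] at hZ
  have hsum := Submodule.finrank_sup_add_finrank_inf_eq
    (LinearMap.ker X.mulVecLin) (LinearMap.ker Y.mulVecLin)
  rw [hsup, finrank_top, hdim] at hsum
  have hZr : (X - τ • Y).rank
      + Module.finrank ℝ ↥(LinearMap.ker X.mulVecLin ⊓ LinearMap.ker Y.mulVecLin) = n := hZ
  show (X - τ • Y).rank = X.rank + Y.rank
  unfold Matrix.rank
  unfold Matrix.rank at hZr
  omega
end

section
/- Let E be a real inner product space and let ε > 0. The map φ : E → E defined by φ(u) = u / max(‖u‖, ε) is Lipschitz with constant 1/ε; i.e., for all u, v ∈ E, ‖φ(u) − φ(v)‖ ≤ (1/ε)·‖u − v‖. -/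
open RealInnerProductSpace

/-- Variational inequality for the clamped projection onto the ball of radius `ε`. -/
lemma clamp_key {E : Type*} [NormedAddCommGroup E] [InnerProductSpace ℝ E]
    (ε : ℝ) (hε : 0 < ε) (u z : E) (hz : ‖z‖ ≤ ε) :
    0 ≤ ⟪(ε * (max ‖u‖ ε)⁻¹) • u - z, u - (ε * (max ‖u‖ ε)⁻¹) • u⟫ := by
  set a := max ‖u‖ ε with ha
  have ha0 : 0 < a := lt_of_lt_of_le hε (le_max_right _ _)
  set c : ℝ := ε * a⁻¹ with hc
  have hexp : u - c • u = (1 - c) • u := by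
    rw [sub_smul, one_smul]
  rw [hexp, real_inner_smul_right, inner_sub_left, real_inner_smul_left]
  have hc1 : c ≤ 1 := by
    rw [hc]
    rw [mul_inv_le_iff₀ ha0, one_mul]
    exact le_max_right _ _
  rcases le_or_gt ‖u‖ ε with h | h
  · have : a = ε := max_eq_right h
    have : c = 1 := by rw [hc, this, mul_inv_cancel₀ hε.ne']
    simp [this]
  · have haa : a = ‖u‖ := max_eq_left h.le
    have hzu : ⟪z, u⟫ ≤ ε * ‖u‖ := by
      calc ⟪z, u⟫ ≤ ‖z‖ * ‖u‖ := real_inner_le_norm z u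
        _ ≤ ε * ‖u‖ := by nlinarith [norm_nonneg u]
    have hcuu : c * ⟪u, u⟫ = ε * ‖u‖ := by
      rw [real_inner_self_eq_norm_sq, hc, haa]
      have : ‖u‖ ≠ 0 := (hε.trans h).ne'
      field_simp
    nlinarith [hzu, hcuu]

/-- The clamped normalization `φ(u) = u / max(‖u‖, ε)` is
`(1/ε)`-Lipschitz on a real inner product space. -/
theorem clamped_normalization_lipschitz {E : Type*} [NormedAddCommGroup E]
    [InnerProductSpace ℝ E] (ε : ℝ) (hε : 0 < ε) :
    ∀ u v : E, ‖(max ‖u‖ ε)⁻¹ • u - (max ‖v‖ ε)⁻¹ • v‖ ≤ (1 / ε) * ‖u - v‖ := by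
  intro u v
  set a := max ‖u‖ ε with ha
  set b := max ‖v‖ ε with hb
  have ha0 : 0 < a := lt_of_lt_of_le hε (le_max_right _ _)
  have hb0 : 0 < b := lt_of_lt_of_le hε (le_max_right _ _)
  set P : E := (ε * a⁻¹) • u with hP
  set Q : E := (ε * b⁻¹) • v with hQ
  have hPnorm : ‖P‖ ≤ ε := by
    rw [hP, norm_smul, Real.norm_eq_abs, abs_of_pos (show (0:ℝ) < ε * a⁻¹ by positivity)]
    calc ε * a⁻¹ * ‖u‖ ≤ ε * a⁻¹ * a :=
          mul_le_mul_of_nonneg_left (le_max_left _ _) (by positivity)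
      _ = ε := by field_simp
  have hQnorm : ‖Q‖ ≤ ε := by
    rw [hQ, norm_smul, Real.norm_eq_abs, abs_of_pos (show (0:ℝ) < ε * b⁻¹ by positivity)]
    calc ε * b⁻¹ * ‖v‖ ≤ ε * b⁻¹ * b :=
          mul_le_mul_of_nonneg_left (le_max_left _ _) (by positivity)
      _ = ε := by field_simp
  have key1 : 0 ≤ ⟪P - Q, u - P⟫ := clamp_key ε hε u Q hQnorm
  have key2 : 0 ≤ ⟪Q - P, v - Q⟫ := clamp_key ε hε v P hPnorm
  have hsq : ‖P - Q‖ ^ 2 ≤ ⟪P - Q, u - v⟫ := by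
    have hdecomp : ⟪P - Q, u - v⟫ = ⟪P - Q, P - Q⟫ + ⟪P - Q, u - P⟫ + ⟪Q - P, v - Q⟫ := by
      have h1 : ⟪Q - P, v - Q⟫ = -⟪P - Q, v - Q⟫ := by
        rw [← inner_neg_left]; congr 1; abel
      have harg : u - v = (P - Q) + (u - P) - (v - Q) := by abel
      rw [harg, inner_sub_right, inner_add_right, h1]
      ring
    rw [hdecomp, ← real_inner_self_eq_norm_sq]
    linarith
  have hCS : ⟪P - Q, u - v⟫ ≤ ‖P - Q‖ * ‖u - v‖ := real_inner_le_norm _ _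
  have hPQ : ‖P - Q‖ ≤ ‖u - v‖ := by
    rcases eq_or_lt_of_le (norm_nonneg (P - Q)) with h | h
    · rw [← h]; exact norm_nonneg _
    · nlinarith
  have hPQeq : P - Q = ε • (a⁻¹ • u - b⁻¹ • v) := by
    rw [hP, hQ, smul_sub, smul_smul, smul_smul]
  have : ‖P - Q‖ = ε * ‖a⁻¹ • u - b⁻¹ • v‖ := by
    rw [hPQeq, norm_smul, Real.norm_eq_abs, abs_of_pos hε]
  rw [this] at hPQ
  rw [div_mul_eq_mul_div, one_mul, le_div_iff₀ hε]
  linarith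
end

section
/- Let W₀ ∈ ℝ^{d_out × d_in} with d_in ≥ 1, let ε > 0, set m_j = ‖W₀^{[:,j]}‖₂ for each column index j, and define the directional projection P : ℝ^{d_out × d_in} → ℝ^{d_out × d_in} by letting the j-th column of P(ΔW) be (m_j / max(‖(W₀+ΔW)^{[:,j]}‖₂, ε)) · (W₀+ΔW)^{[:,j]}. Then P is Lipschitz in the Frobenius norm with constant C = (max_j m_j)/ε; i.e., for all ΔW₁, ΔW₂ ∈ ℝ^{d_out × d_in}, ‖P(ΔW₁) − P(ΔW₂)‖_F ≤ C·‖ΔW₁ − ΔW₂‖_F. -/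
/-- The `j`-th column of a matrix, as a vector in Euclidean space. -/
noncomputable def matCol {dout din : ℕ} (X : Matrix (Fin dout) (Fin din) ℝ) (j : Fin din) :
    EuclideanSpace ℝ (Fin dout) :=
  (WithLp.equiv 2 (Fin dout → ℝ)).symm (fun i => X i j)

/-- The Frobenius norm of a matrix: `‖X‖_F² = Σ_j ‖X^{[:,j]}‖₂²`. -/
noncomputable def frobNorm {dout din : ℕ} (X : Matrix (Fin dout) (Fin din) ℝ) : ℝ :=
  Real.sqrt (∑ j, ‖matCol X j‖ ^ 2)

/-- The D²-LoRA directional projection: the `j`-th column of `P(ΔW)` is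
`(m_j / max(‖(W₀+ΔW)^{[:,j]}‖, ε)) • (W₀+ΔW)^{[:,j]}` with `m_j = ‖W₀^{[:,j]}‖`. -/
noncomputable def dirProj {dout din : ℕ} (W0 : Matrix (Fin dout) (Fin din) ℝ) (ε : ℝ)
    (ΔW : Matrix (Fin dout) (Fin din) ℝ) : Matrix (Fin dout) (Fin din) ℝ :=
  Matrix.of fun i j =>
    (‖matCol W0 j‖ / max ‖matCol (W0 + ΔW) j‖ ε) * (W0 + ΔW) i j


open scoped InnerProductSpace

variable {E : Type*} [NormedAddCommGroup E] [InnerProductSpace ℝ E]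

/-- variational inequality for ball projection -/
lemma proj_var (ε : ℝ) (hε : 0 < ε) (u z : E) (hz : ‖z‖ ≤ ε) :
    0 ≤ ⟪u - (ε / max ‖u‖ ε) • u, (ε / max ‖u‖ ε) • u - z⟫_ℝ := by
  set a := max ‖u‖ ε with ha
  have ha0 : 0 < a := lt_of_lt_of_le hε (le_max_right _ _)
  have h1 : u - (ε / a) • u = (1 - ε / a) • u := by
    rw [sub_smul, one_smul]
  rw [h1, real_inner_smul_left]
  have h2 : ⟪u, (ε / a) • u - z⟫_ℝ = (ε / a) * ‖u‖ ^ 2 - ⟪u, z⟫_ℝ := by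
    rw [inner_sub_right, real_inner_smul_right, real_inner_self_eq_norm_sq]
  rw [h2]
  rcases le_or_gt ‖u‖ ε with h | h
  · have : a = ε := max_eq_right h
    rw [this, div_self hε.ne']
    simp
  · have haa : a = ‖u‖ := max_eq_left h.le
    apply mul_nonneg
    · have : ε / a ≤ 1 := by
        rw [div_le_one ha0]; exact le_max_right _ _
      linarith
    · rw [haa]
      have hiz : ⟪u, z⟫_ℝ ≤ ‖u‖ * ε :=
        (real_inner_le_norm u z).trans (by
          have := norm_nonneg u; nlinarith)
      have hu0 : ‖u‖ ≠ 0 := by linarith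
      have : ε / ‖u‖ * ‖u‖ ^ 2 = ε * ‖u‖ := by
        field_simp
      rw [this]
      linarith [hiz]

lemma proj_nonexp (ε : ℝ) (hε : 0 < ε) (u v : E) :
    ‖(ε / max ‖u‖ ε) • u - (ε / max ‖v‖ ε) • v‖ ≤ ‖u - v‖ := by
  set Pu := (ε / max ‖u‖ ε) • u with hPu
  set Pv := (ε / max ‖v‖ ε) • v with hPv
  have hnorm : ∀ w : E, ‖(ε / max ‖w‖ ε) • w‖ ≤ ε := by
    intro w
    have ha0 : 0 < max ‖w‖ ε := lt_of_lt_of_le hε (le_max_right _ _)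
    rw [norm_smul, Real.norm_eq_abs, abs_of_nonneg (div_nonneg hε.le ha0.le)]
    rw [div_mul_eq_mul_div, mul_comm, ← div_mul_eq_mul_div]
    calc ‖w‖ / max ‖w‖ ε * ε ≤ 1 * ε := by
          apply mul_le_mul_of_nonneg_right _ hε.le
          rw [div_le_one ha0]; exact le_max_left _ _
      _ = ε := one_mul ε
  have h1 : 0 ≤ ⟪u - Pu, Pu - Pv⟫_ℝ := proj_var ε hε u Pv (hnorm v)
  have h2 : 0 ≤ ⟪v - Pv, Pv - Pu⟫_ℝ := proj_var ε hε v Pu (hnorm u)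
  have key : ‖Pu - Pv‖ ^ 2 ≤ ⟪u - v, Pu - Pv⟫_ℝ := by
    have expand : ⟪u - v, Pu - Pv⟫_ℝ
        = ⟪u - Pu, Pu - Pv⟫_ℝ + ⟪Pu - Pv, Pu - Pv⟫_ℝ + ⟪Pv - v, Pu - Pv⟫_ℝ := by
      rw [← inner_add_left, ← inner_add_left]
      congr 1
      abel
    have e2 : ⟪Pv - v, Pu - Pv⟫_ℝ = ⟪v - Pv, Pv - Pu⟫_ℝ := by
      rw [← neg_sub v Pv, ← neg_sub Pu Pv, inner_neg_left, inner_neg_right]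
    have e3 : ⟪Pu - Pv, Pu - Pv⟫_ℝ = ‖Pu - Pv‖ ^ 2 := real_inner_self_eq_norm_sq _
    rw [expand, e2, e3]
    linarith
  have hub : ⟪u - v, Pu - Pv⟫_ℝ ≤ ‖u - v‖ * ‖Pu - Pv‖ := real_inner_le_norm _ _
  nlinarith [norm_nonneg (Pu - Pv), norm_nonneg (u - v)]

lemma col_lip (ε : ℝ) (hε : 0 < ε) (m : ℝ) (hm : 0 ≤ m) (u v : E) :
    ‖(m / max ‖u‖ ε) • u - (m / max ‖v‖ ε) • v‖ ≤ m / ε * ‖u - v‖ := by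
  have h1 : (m / max ‖u‖ ε) • u = (m / ε) • ((ε / max ‖u‖ ε) • u) := by
    rw [smul_smul]; congr 1; field_simp
  have h2 : (m / max ‖v‖ ε) • v = (m / ε) • ((ε / max ‖v‖ ε) • v) := by
    rw [smul_smul]; congr 1; field_simp
  rw [h1, h2, ← smul_sub, norm_smul, Real.norm_eq_abs,
    abs_of_nonneg (div_nonneg hm hε.le)]
  exact mul_le_mul_of_nonneg_left (proj_nonexp ε hε u v) (div_nonneg hm hε.le)

lemma matCol_sub {dout din : ℕ} (X Y : Matrix (Fin dout) (Fin din) ℝ) (j : Fin din) :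
    matCol (X - Y) j = matCol X j - matCol Y j := by
  ext i
  simp [matCol, Matrix.sub_apply]

lemma matCol_add {dout din : ℕ} (X Y : Matrix (Fin dout) (Fin din) ℝ) (j : Fin din) :
    matCol (X + Y) j = matCol X j + matCol Y j := by
  ext i
  simp [matCol, Matrix.add_apply]

lemma matCol_dirProj {dout din : ℕ} (W0 : Matrix (Fin dout) (Fin din) ℝ) (ε : ℝ)
    (ΔW : Matrix (Fin dout) (Fin din) ℝ) (j : Fin din) :
    matCol (dirProj W0 ε ΔW) j
      = (‖matCol W0 j‖ / max ‖matCol (W0 + ΔW) j‖ ε) • matCol (W0 + ΔW) j := by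
  ext i
  simp [matCol, dirProj]

set_option maxHeartbeats 1000000 in
/-- The directional projection `P` is Lipschitz in the Frobenius
norm with constant `C = (max_j m_j) / ε`. -/
theorem dirProj_lipschitz (dout din : ℕ) (hdin : 0 < din)
    (W0 : Matrix (Fin dout) (Fin din) ℝ) (ε : ℝ) (hε : 0 < ε) (C : ℝ)
    (hC : C = (Finset.univ.sup' (Finset.univ_nonempty_iff.mpr ⟨⟨0, hdin⟩⟩)
      (fun j => ‖matCol W0 j‖)) / ε) :
    ∀ ΔW₁ ΔW₂ : Matrix (Fin dout) (Fin din) ℝ,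
      frobNorm (dirProj W0 ε ΔW₁ - dirProj W0 ε ΔW₂) ≤ C * frobNorm (ΔW₁ - ΔW₂) := by
  intro ΔW₁ ΔW₂
  have hC0 : 0 ≤ C := by
    rw [hC]
    apply div_nonneg _ hε.le
    rw [Finset.le_sup'_iff]
    exact ⟨⟨0, hdin⟩, Finset.mem_univ _, norm_nonneg _⟩
  have colbound : ∀ j : Fin din,
      ‖matCol (dirProj W0 ε ΔW₁ - dirProj W0 ε ΔW₂) j‖ ≤ C * ‖matCol (ΔW₁ - ΔW₂) j‖ := by
    intro j
    rw [matCol_sub, matCol_dirProj, matCol_dirProj]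
    have hds : matCol (W0 + ΔW₁) j - matCol (W0 + ΔW₂) j = matCol (ΔW₁ - ΔW₂) j := by
      rw [matCol_add, matCol_add, matCol_sub]; abel
    calc ‖(‖matCol W0 j‖ / max ‖matCol (W0 + ΔW₁) j‖ ε) • matCol (W0 + ΔW₁) j -
            (‖matCol W0 j‖ / max ‖matCol (W0 + ΔW₂) j‖ ε) • matCol (W0 + ΔW₂) j‖
        ≤ ‖matCol W0 j‖ / ε * ‖matCol (W0 + ΔW₁) j - matCol (W0 + ΔW₂) j‖ :=
          col_lip ε hε _ (norm_nonneg _) _ _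
      _ ≤ C * ‖matCol (ΔW₁ - ΔW₂) j‖ := by
          rw [hds]
          apply mul_le_mul_of_nonneg_right _ (norm_nonneg _)
          rw [hC]
          gcongr
          rw [Finset.le_sup'_iff]
          exact ⟨j, Finset.mem_univ _, le_refl _⟩
  unfold frobNorm
  have hsum : (∑ j, ‖matCol (dirProj W0 ε ΔW₁ - dirProj W0 ε ΔW₂) j‖ ^ 2)
      ≤ ∑ j, C ^ 2 * ‖matCol (ΔW₁ - ΔW₂) j‖ ^ 2 := by
    apply Finset.sum_le_sum
    intro j _
    have h := colbound j
    nlinarith [norm_nonneg (matCol (dirProj W0 ε ΔW₁ - dirProj W0 ε ΔW₂) j),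
      norm_nonneg (matCol (ΔW₁ - ΔW₂) j)]
  calc Real.sqrt (∑ j, ‖matCol (dirProj W0 ε ΔW₁ - dirProj W0 ε ΔW₂) j‖ ^ 2)
      ≤ Real.sqrt (∑ j, C ^ 2 * ‖matCol (ΔW₁ - ΔW₂) j‖ ^ 2) := Real.sqrt_le_sqrt hsum
    _ = C * Real.sqrt (∑ j, ‖matCol (ΔW₁ - ΔW₂) j‖ ^ 2) := by
        rw [← Finset.mul_sum, Real.sqrt_mul (sq_nonneg C), Real.sqrt_sq hC0]
end
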